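/- arXiv:0709.2504 — 4 statements merged into one kernel-verified Lean document; each statement's English description precedes it below -/
import Mathlib

section
/- The function s(z) = (1+z)/2 + (z-1)^4/20 is a Schur function, i.e., it satisfies |s(z)| ≤ 1 for all z in the open unit disk; consequently, a Schur function may satisfy s(z) = αz + 1 - α + O((z-1)^4) at z = 1 with α = 1/2 without being equal to αz + 1 - α. -/
noncomputable section

open Complex Filter

/-- The open unit disk in the complex plane. -/
def unitDisk : Set ℂ := {z : ℂ | ‖z‖ < 1}

/-- A Schur function: analytic on the open unit disk and bounded by one in modulus there. -/
def SchurFunction (f : ℂ → ℂ) : Prop :=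
  DifferentiableOn ℂ f unitDisk ∧ ∀ z ∈ unitDisk, ‖f z‖ ≤ 1

/-- The Stolz region with parameter `K` at the boundary point `1`. -/
def stolzRegion (K : ℝ) : Set ℂ :=
  {z : ℂ | ‖z‖ < 1 ∧ ‖z - 1‖ < K * (1 - ‖z‖)}

/-- `f(z) = O((z-1)^m)` as `z` tends nontangentially to `1`. -/
def NTBigO (f : ℂ → ℂ) (m : ℕ) : Prop :=
  ∀ K > (1 : ℝ), f =O[nhdsWithin 1 (stolzRegion K)] fun z => (z - 1) ^ m

/-- The example `s(z) = (1+z)/2 + (z-1)⁴/20`. -/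
def exampleSchur : ℂ → ℂ := fun z => (1 + z) / 2 + (z - 1) ^ 4 / 20

lemma key_real (a b : ℝ) (ha : 0 ≤ a) (hb : 0 ≤ b) (hab : a ^ 2 + b ^ 2 ≤ 4) :
    a / 2 + b ^ 4 / 20 ≤ 1 := by
  have ha2 : a ≤ 2 := by nlinarith [sq_nonneg b]
  have hb4 : b ^ 4 ≤ (4 - a ^ 2) ^ 2 := by nlinarith [sq_nonneg b, sq_nonneg a]
  nlinarith [mul_nonneg (mul_nonneg (sub_nonneg.2 ha2) (sq_nonneg (a - 2/3)))
    (by linarith : (0:ℝ) ≤ a + 10/3)]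

/-- `s(z) = (1+z)/2 + (z-1)⁴/20` is a Schur function; consequently a Schur function may
satisfy `s(z) = αz + 1 - α + O((z-1)⁴)` at `z = 1` with `α = 1/2` without being equal to
`αz + 1 - α`. -/
theorem example_no_rigidity :
    SchurFunction exampleSchur ∧
    NTBigO (fun z => exampleSchur z - ((1 / 2 : ℝ) * z + 1 - (1 / 2 : ℝ))) 4 ∧
    ¬(∀ z ∈ unitDisk, exampleSchur z = (1 / 2 : ℝ) * z + 1 - (1 / 2 : ℝ)) := by
  refine ⟨⟨?_, ?_⟩, ?_, ?_⟩
  · apply DifferentiableOn.add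
    · exact (differentiable_const _ |>.add differentiable_id).div_const _ |>.differentiableOn
    · exact ((differentiable_id.sub_const _).pow 4).div_const _ |>.differentiableOn
  · intro z hz
    have hz' : ‖z‖ < 1 := hz
    set a := ‖1 + z‖ with ha'
    set b := ‖z - 1‖ with hb'
    have hab : a ^ 2 + b ^ 2 ≤ 4 := by
      have h1 : a ^ 2 + b ^ 2 = 2 + 2 * (‖z‖) ^ 2 := by
        rw [ha', hb', Complex.sq_norm, Complex.sq_norm, Complex.sq_norm]
        simp [Complex.normSq_apply]; ring
      nlinarith [norm_nonneg z]
    have habs : ‖exampleSchur z‖ ≤ a / 2 + b ^ 4 / 20 := by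
      refine le_trans (norm_add_le _ _) ?_
      rw [norm_div, norm_div, norm_pow]
      simp [ha', hb']
    exact le_trans habs (key_real a b (norm_nonneg _) (norm_nonneg _) hab)
  · intro K hK
    have heq : (fun z : ℂ => exampleSchur z - ((1 / 2 : ℝ) * z + 1 - (1 / 2 : ℝ)))
        = fun z => (z - 1) ^ 4 / 20 := by
      funext z
      simp only [exampleSchur]
      push_cast
      ring
    rw [heq]
    refine Asymptotics.IsBigO.of_bound (1 / 20) (Filter.Eventually.of_forall fun z => ?_)
    have h20 : ‖((z - 1) ^ 4 / 20 : ℂ)‖ = ‖(z - 1) ^ 4‖ / 20 := by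
      rw [norm_div]; norm_num
    rw [h20]
    linarith [norm_nonneg ((z - 1) ^ 4)]
  · intro h
    have h0 : (0 : ℂ) ∈ unitDisk := by simp [unitDisk]
    have := h 0 h0
    simp only [exampleSchur] at this
    norm_num at this
end
end

section
/- For each α ∈ (0,1) there exists a sufficiently small β > 0 such that the function s(z) = αz + 1 - α + β(1-z)^4 is a Schur function, i.e., |s(z)| ≤ 1 for all z in the open unit disk. -/
noncomputable section

open Complex Filter

theorem exists_schur_perturbation (α : ℝ) (hα : α ∈ Set.Ioo (0 : ℝ) 1) :
    ∃ β : ℝ, 0 < β ∧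
      SchurFunction (fun z => α * z + 1 - α + β * (1 - z) ^ 4) := by
  obtain ⟨hα0, hα1⟩ := hα
  have hβpos : (0:ℝ) < α * (1 - α) / 8 := by nlinarith
  refine ⟨α * (1 - α) / 8, hβpos, ?_, ?_⟩
  · apply Differentiable.differentiableOn
    fun_prop
  · intro z hz
    simp only [unitDisk, Set.mem_setOf_eq] at hz
    set β : ℝ := α * (1 - α) / 8 with hβ
    set w : ℂ := 1 - z with hw
    set t : ℝ := 1 - z.re with ht
    have hrez : |z.re| ≤ ‖z‖ := Complex.abs_re_le_norm z
    have ht0 : 0 ≤ t := by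
      have := abs_le.mp hrez
      simp only [ht]; linarith [this.2]
    have ht2 : t ≤ 2 := by
      have := abs_le.mp hrez
      simp only [ht]; linarith [this.1]
    have hnsz : Complex.normSq z ≤ 1 := by
      rw [← Complex.sq_norm]
      nlinarith [norm_nonneg z]
    have hnsz' : z.re * z.re + z.im * z.im ≤ 1 := by
      rw [← Complex.normSq_apply]; exact hnsz
    have him : z.im * z.im ≤ 2 * t - t ^ 2 := by
      simp only [ht]; nlinarith
    -- bound on abs (1 - α * w)
    have hns1 : Complex.normSq (1 - (α:ℂ) * w) ≤ (1 - α * (1 - α) * t) ^ 2 := by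
      have : Complex.normSq (1 - (α:ℂ) * w)
          = (1 - α * t) ^ 2 + α ^ 2 * (z.im * z.im) := by
        simp only [Complex.normSq_apply, hw, ht]
        simp [Complex.sub_re, Complex.sub_im, Complex.mul_re, Complex.mul_im]
        ring
      rw [this]
      nlinarith [sq_nonneg (α * t), sq_nonneg α, mul_nonneg (mul_nonneg hα0.le (by linarith : (0:ℝ) ≤ 1 - α)) ht0]
    have hrhs0 : 0 ≤ 1 - α * (1 - α) * t := by nlinarith [sq_nonneg (α - 1/2)]
    have habs1 : ‖1 - (α:ℂ) * w‖ ≤ 1 - α * (1 - α) * t := by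
      rw [Complex.norm_def]
      calc Real.sqrt (Complex.normSq (1 - (α:ℂ) * w))
          ≤ Real.sqrt ((1 - α * (1 - α) * t) ^ 2) := Real.sqrt_le_sqrt hns1
        _ = 1 - α * (1 - α) * t := by rw [Real.sqrt_sq hrhs0]
    -- bound on abs w
    have hnsw : ‖w‖ ^ 2 ≤ 2 * t := by
      rw [Complex.sq_norm]
      simp only [Complex.normSq_apply, hw, ht]
      simp [Complex.sub_re, Complex.sub_im]
      nlinarith
    have habsw4 : ‖w‖ ^ 4 ≤ 4 * t ^ 2 := by
      have h1 : ‖w‖ ^ 4 = (‖w‖ ^ 2) ^ 2 := by ring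
      rw [h1]
      calc (‖w‖ ^ 2) ^ 2 ≤ (2 * t) ^ 2 := by
            apply pow_le_pow_left₀ (sq_nonneg _) hnsw
        _ = 4 * t ^ 2 := by ring
    -- assemble
    have hs : ((α:ℂ) * z + 1 - (α:ℂ) + (β:ℂ) * (1 - z) ^ 4)
        = (1 - (α:ℂ) * w) + (β:ℂ) * w ^ 4 := by
      rw [hw]; ring
    calc ‖(α:ℂ) * z + 1 - (α:ℂ) + (β:ℂ) * (1 - z) ^ 4‖
        = ‖(1 - (α:ℂ) * w) + (β:ℂ) * w ^ 4‖ := by rw [hs]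
      _ ≤ ‖1 - (α:ℂ) * w‖ + ‖(β:ℂ) * w ^ 4‖ :=
          norm_add_le _ _
      _ = ‖1 - (α:ℂ) * w‖ + β * ‖w‖ ^ 4 := by
          rw [norm_mul, norm_pow, Complex.norm_real, Real.norm_eq_abs, _root_.abs_of_nonneg hβpos.le]
      _ ≤ (1 - α * (1 - α) * t) + β * (4 * t ^ 2) := by
          have := mul_le_mul_of_nonneg_left habsw4 hβpos.le
          linarith
      _ ≤ 1 := by nlinarith [mul_nonneg hβpos.le ht0]
end
end

section
/- Let α ∈ (0,1) and let f₁ be a holomorphic function on the open unit disk 𝔻 with Re f₁(z) > 0 for all z ∈ 𝔻, such that (1-z)·f₁(z) → 2/α as z tends nontangentially to 1. Then for every z ∈ 𝔻 one has Re f₁(z) ≥ (1/α)·(1 - |z|²)/|1 - z|². -/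
noncomputable section

open Complex Filter

namespace JuliaAux

/-- Möbius involution of the unit disk swapping `0` and `a`. -/
noncomputable def mob (a z : ℂ) : ℂ := (a - z) / (1 - (starRingEnd ℂ) a * z)

lemma nsq_key (a z : ℂ) :
    normSq (1 - (starRingEnd ℂ) a * z) - normSq (a - z)
      = (1 - normSq a) * (1 - normSq z) := by
  simp only [normSq_apply, sub_re, sub_im, mul_re, mul_im, one_re, one_im, conj_re, conj_im]
  ring

lemma four_re (w : ℂ) : normSq (w + 1) - normSq (w - 1) = 4 * w.re := by
  simp only [normSq_apply, add_re, add_im, sub_re, sub_im, one_re, one_im]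
  ring

lemma nsq_lt_one {z : ℂ} (hz : ‖z‖ < 1) : normSq z < 1 := by
  have h := Complex.sq_norm z
  nlinarith [norm_nonneg z]

lemma abs_lt_abs_of_nsq {u v : ℂ} (h : normSq u < normSq v) :
    ‖u‖ < ‖v‖ := by
  rw [Complex.norm_def, Complex.norm_def]
  exact Real.sqrt_lt_sqrt (normSq_nonneg _) h

lemma denom_ne {a z : ℂ} (ha : ‖a‖ < 1) (hz : ‖z‖ < 1) :
    1 - (starRingEnd ℂ) a * z ≠ 0 := by
  intro h
  have h1 := nsq_key a z
  rw [h, normSq_zero] at h1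
  nlinarith [normSq_nonneg (a - z), nsq_lt_one ha, nsq_lt_one hz]

lemma mob_abs_lt {a z : ℂ} (ha : ‖a‖ < 1) (hz : ‖z‖ < 1) :
    ‖mob a z‖ < 1 := by
  rw [mob, norm_div, div_lt_one (norm_pos_iff.mpr (denom_ne ha hz))]
  have h1 := nsq_key a z
  have h2 : 0 < (1 - normSq a) * (1 - normSq z) :=
    mul_pos (by linarith [nsq_lt_one ha]) (by linarith [nsq_lt_one hz])
  exact abs_lt_abs_of_nsq (by linarith)

lemma mob_mob {a z : ℂ} (ha : ‖a‖ < 1) (hz : ‖z‖ < 1) :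
    mob a (mob a z) = z := by
  have h0 := denom_ne ha hz
  have h2 : 1 - (starRingEnd ℂ) a * mob a z ≠ 0 := denom_ne ha (mob_abs_lt ha hz)
  have hna : 1 - a * (starRingEnd ℂ) a ≠ 0 := by
    rw [Complex.mul_conj]
    exact sub_ne_zero.mpr (by exact_mod_cast (nsq_lt_one ha).ne')
  rw [mob] at h2 ⊢
  rw [mob]
  have h0' : 1 - z * (starRingEnd ℂ) a ≠ 0 := by rwa [mul_comm] at h0
  have h3 : 1 - z * (starRingEnd ℂ) a - (a - z) * (starRingEnd ℂ) a ≠ 0 := by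
    rw [show 1 - z * (starRingEnd ℂ) a - (a - z) * (starRingEnd ℂ) a
      = 1 - a * (starRingEnd ℂ) a from by ring]; exact hna
  field_simp
  ring

lemma mem_ball_iff_abs {w : ℂ} : w ∈ Metric.ball (0:ℂ) 1 ↔ ‖w‖ < 1 := by
  simp [Metric.mem_ball, Complex.dist_eq]

lemma mob_diff {b : ℂ} (hb : ‖b‖ < 1) :
    DifferentiableOn ℂ (mob b) (Metric.ball (0:ℂ) 1) := by
  apply DifferentiableOn.div
  · exact ((differentiable_const b).sub differentiable_id).differentiableOn
  · exact ((differentiable_const 1).sub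
      ((differentiable_const _).mul differentiable_id)).differentiableOn
  · intro x hx
    exact denom_ne hb (mem_ball_iff_abs.1 hx)

lemma mob_mapsTo {b : ℂ} (hb : ‖b‖ < 1) :
    Set.MapsTo (mob b) (Metric.ball (0:ℂ) 1) (Metric.ball (0:ℂ) 1) := fun _ hx =>
  mem_ball_iff_abs.2 (mob_abs_lt hb (mem_ball_iff_abs.1 hx))

/-- The Schwarz–Pick lemma for a holomorphic self-map of the unit disk. -/
lemma schwarz_pick {F : ℂ → ℂ} (hF : DifferentiableOn ℂ F (Metric.ball (0:ℂ) 1))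
    (hmaps : Set.MapsTo F (Metric.ball (0:ℂ) 1) (Metric.ball (0:ℂ) 1))
    {a z : ℂ} (ha : ‖a‖ < 1) (hz : ‖z‖ < 1) :
    ‖F z - F a‖ * ‖1 - (starRingEnd ℂ) a * z‖
      ≤ ‖z - a‖ * ‖1 - (starRingEnd ℂ) (F a) * F z‖ := by
  have hFa : ‖F a‖ < 1 :=
    mem_ball_iff_abs.1 (hmaps (mem_ball_iff_abs.2 ha))
  have hFz : ‖F z‖ < 1 :=
    mem_ball_iff_abs.1 (hmaps (mem_ball_iff_abs.2 hz))
  set G : ℂ → ℂ := fun w => mob (F a) (F (mob a w)) with hGdef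
  have hGdiff : DifferentiableOn ℂ G (Metric.ball (0:ℂ) 1) :=
    ((mob_diff hFa).comp hF hmaps).comp (mob_diff ha) (mob_mapsTo ha)
  have hGmaps : Set.MapsTo G (Metric.ball (0:ℂ) 1) (Metric.ball (0:ℂ) 1) :=
    (mob_mapsTo hFa).comp (hmaps.comp (mob_mapsTo ha))
  have hG0 : G 0 = 0 := by
    simp [hGdef, mob]
  have key := Complex.norm_le_norm_of_mapsTo_ball hGdiff (hGmaps.mono_right Metric.ball_subset_closedBall) hG0
    (z := mob a z) (mob_abs_lt ha hz)
  have hGz : G (mob a z) = mob (F a) (F z) := by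
    rw [hGdef]
    simp only
    rw [mob_mob ha hz]
  rw [hGz] at key
  rw [mob, mob, norm_div, norm_div,
    div_le_div_iff₀ (norm_pos_iff.mpr (denom_ne hFa hFz))
      (norm_pos_iff.mpr (denom_ne ha hz))] at key
  calc ‖F z - F a‖ * ‖1 - (starRingEnd ℂ) a * z‖
      = ‖F a - F z‖ * ‖1 - (starRingEnd ℂ) a * z‖ := by
        rw [norm_sub_rev]
    _ ≤ ‖a - z‖ * ‖1 - (starRingEnd ℂ) (F a) * F z‖ := key
    _ = ‖z - a‖ * ‖1 - (starRingEnd ℂ) (F a) * F z‖ := by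
        rw [norm_sub_rev]

/-- The Schwarz–Pick lemma in its `normSq` (Julia-type) form. -/
lemma schwarz_pick_nsq {F : ℂ → ℂ} (hF : DifferentiableOn ℂ F (Metric.ball (0:ℂ) 1))
    (hmaps : Set.MapsTo F (Metric.ball (0:ℂ) 1) (Metric.ball (0:ℂ) 1))
    {a z : ℂ} (ha : ‖a‖ < 1) (hz : ‖z‖ < 1) :
    (1 - normSq a) * (1 - normSq z) * normSq (1 - (starRingEnd ℂ) (F a) * F z)
      ≤ (1 - normSq (F a)) * (1 - normSq (F z)) * normSq (1 - (starRingEnd ℂ) a * z) := by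
  have hFa : ‖F a‖ < 1 :=
    mem_ball_iff_abs.1 (hmaps (mem_ball_iff_abs.2 ha))
  have hFz : ‖F z‖ < 1 :=
    mem_ball_iff_abs.1 (hmaps (mem_ball_iff_abs.2 hz))
  have sp := schwarz_pick hF hmaps ha hz
  have sq : normSq (F z - F a) * normSq (1 - (starRingEnd ℂ) a * z)
      ≤ normSq (z - a) * normSq (1 - (starRingEnd ℂ) (F a) * F z) := by
    have h := mul_le_mul sp sp (by positivity) (by positivity)
    calc normSq (F z - F a) * normSq (1 - (starRingEnd ℂ) a * z)
        = (‖F z - F a‖ * ‖1 - (starRingEnd ℂ) a * z‖) *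
          (‖F z - F a‖ * ‖1 - (starRingEnd ℂ) a * z‖) := by
          rw [← Complex.sq_norm, ← Complex.sq_norm]; ring
      _ ≤ (‖z - a‖ * ‖1 - (starRingEnd ℂ) (F a) * F z‖) *
          (‖z - a‖ * ‖1 - (starRingEnd ℂ) (F a) * F z‖) := h
      _ = normSq (z - a) * normSq (1 - (starRingEnd ℂ) (F a) * F z) := by
          rw [← Complex.sq_norm, ← Complex.sq_norm]; ring
  have k1 := nsq_key (F a) (F z)
  have k2 := nsq_key a z
  have e1 : normSq (F a - F z) = normSq (F z - F a) := by rw [← neg_sub, normSq_neg]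
  have e2 : normSq (a - z) = normSq (z - a) := by rw [← neg_sub, normSq_neg]
  have hA : normSq (F z - F a)
      = normSq (1 - (starRingEnd ℂ) (F a) * F z)
        - (1 - normSq (F a)) * (1 - normSq (F z)) := by linarith
  have hC : normSq (z - a)
      = normSq (1 - (starRingEnd ℂ) a * z) - (1 - normSq a) * (1 - normSq z) := by linarith
  rw [hA, hC] at sq
  nlinarith [sq]

end JuliaAux

open JuliaAux

theorem julia_lower_bound (α : ℝ) (hα : α ∈ Set.Ioo (0 : ℝ) 1) (f₁ : ℂ → ℂ)
    (hf : DifferentiableOn ℂ f₁ unitDisk)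
    (hre : ∀ z ∈ unitDisk, 0 < (f₁ z).re)
    (hlim : ∀ K > (1 : ℝ),
      Tendsto (fun z => (1 - z) * f₁ z) (nhdsWithin 1 (stolzRegion K))
        (nhds ((2 : ℂ) / α))) :
    ∀ z ∈ unitDisk,
      (1 / α) * ((1 - ‖z‖ ^ 2) / ‖1 - z‖ ^ 2) ≤ (f₁ z).re := by
  obtain ⟨hα0, hα1⟩ := hα
  have hαC : (α : ℂ) ≠ 0 := ofReal_ne_zero.mpr hα0.ne'
  have hset : unitDisk = Metric.ball (0:ℂ) 1 := by
    ext w; simp [unitDisk, mem_ball_iff_abs]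
  have hf' : DifferentiableOn ℂ f₁ (Metric.ball (0:ℂ) 1) := hset ▸ hf
  have hre' : ∀ w ∈ Metric.ball (0:ℂ) 1, 0 < (f₁ w).re := hset ▸ hre
  have hden : ∀ w ∈ Metric.ball (0:ℂ) 1, f₁ w + 1 ≠ 0 := by
    intro w hw h
    have h1 := hre' w hw
    have h2 : (f₁ w + 1).re = 0 := by rw [h]; simp
    rw [Complex.add_re, Complex.one_re] at h2
    linarith
  set F : ℂ → ℂ := fun w => (f₁ w - 1) / (f₁ w + 1) with hFdef
  have hFdiff : DifferentiableOn ℂ F (Metric.ball (0:ℂ) 1) :=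
    (hf'.sub (differentiableOn_const 1)).div (hf'.add (differentiableOn_const 1)) hden
  have hFmaps : Set.MapsTo F (Metric.ball (0:ℂ) 1) (Metric.ball (0:ℂ) 1) := by
    intro w hw
    rw [mem_ball_iff_abs, hFdef]
    simp only
    rw [norm_div, div_lt_one (norm_pos_iff.mpr (hden w hw))]
    apply abs_lt_abs_of_nsq
    have := four_re (f₁ w)
    have := hre' w hw
    linarith
  have h1F : ∀ w ∈ Metric.ball (0:ℂ) 1, 1 - F w = 2 / (f₁ w + 1) := by
    intro w hw
    have h0 := hden w hw
    rw [hFdef]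
    field_simp
    ring
  -- the filter of radial approach to 1
  set l : Filter ℝ := nhdsWithin 1 (Set.Ioo (0:ℝ) 1) with hldef
  have hlne : l.NeBot := right_nhdsWithin_Ioo_neBot one_pos
  have hmem : ∀ᶠ r in l, r ∈ Set.Ioo (0:ℝ) 1 := self_mem_nhdsWithin
  have hcoe : Tendsto (fun r : ℝ => (r:ℂ)) l (nhdsWithin 1 (stolzRegion 2)) := by
    rw [tendsto_nhdsWithin_iff]
    constructor
    · have := (Complex.continuous_ofReal.tendsto 1).mono_left
        (nhdsWithin_le_nhds (s := Set.Ioo (0:ℝ) 1))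
      simpa only [Complex.ofReal_one] using this
    · filter_upwards [hmem] with r hr
      obtain ⟨hr0, hr1⟩ := hr
      constructor
      · rw [Complex.norm_real, Real.norm_eq_abs, abs_of_pos hr0]; exact hr1
      · have h1 : ((r:ℂ) - 1) = ((r - 1 : ℝ) : ℂ) := by push_cast; ring
        rw [h1, Complex.norm_real, Real.norm_eq_abs, Complex.norm_real, Real.norm_eq_abs, abs_of_pos hr0,
          abs_of_neg (by linarith : r - 1 < 0)]
        linarith
  have h2α : Tendsto (fun r : ℝ => (1 - (r:ℂ)) * f₁ r) l (nhds ((2:ℂ)/α)) :=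
    (hlim 2 one_lt_two).comp hcoe
  have hle : l ≤ nhds (1:ℝ) := nhdsWithin_le_nhds
  have h1r : Tendsto (fun r : ℝ => 1 - (r:ℂ)) l (nhds 0) := by
    have hc : Continuous fun r : ℝ => 1 - (r:ℂ) :=
      continuous_const.sub Complex.continuous_ofReal
    have := (hc.tendsto 1).mono_left hle
    simpa using this
  have hq : Tendsto (fun r : ℝ => (1 - (r:ℂ)) * (f₁ r + 1)) l (nhds ((2:ℂ)/α)) := by
    have h := h2α.add h1r
    rw [add_zero] at h
    exact h.congr fun r => by ring
  have hq0 : (2:ℂ)/α ≠ 0 := div_ne_zero two_ne_zero hαC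
  have hrC : ∀ᶠ r : ℝ in l, (1 : ℂ) - (r:ℂ) ≠ 0 := by
    filter_upwards [hmem] with r hr
    intro h
    have h1 : (1:ℂ) = (r:ℂ) := sub_eq_zero.mp h
    have h2 : (1:ℝ) = r := by exact_mod_cast h1
    linarith [hr.2]
  have hratio : Tendsto (fun r : ℝ => (1 - F (r:ℂ)) / (1 - (r:ℂ))) l (nhds (α:ℂ)) := by
    have hdiv : Tendsto (fun r : ℝ => (2:ℂ) / ((1 - (r:ℂ)) * (f₁ r + 1))) l
        (nhds ((2:ℂ) / ((2:ℂ)/α))) := tendsto_const_nhds.div hq hq0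
    have h2 : (2:ℂ) / ((2:ℂ)/α) = (α:ℂ) := by field_simp
    rw [h2] at hdiv
    apply hdiv.congr'
    filter_upwards [hmem, hrC] with r hr hr'
    have hrb : (r:ℂ) ∈ Metric.ball (0:ℂ) 1 := by
      rw [mem_ball_iff_abs, Complex.norm_real, Real.norm_eq_abs, abs_of_pos hr.1]; exact hr.2
    rw [h1F _ hrb, div_div, mul_comm (f₁ (r:ℂ) + 1) (1 - (r:ℂ))]
  have hF1 : Tendsto (fun r : ℝ => F (r:ℂ)) l (nhds 1) := by
    have h := hratio.mul h1r
    rw [mul_zero] at h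
    have h' : Tendsto (fun r : ℝ => 1 - F (r:ℂ)) l (nhds 0) := by
      apply h.congr'
      filter_upwards [hrC] with r hr
      rw [div_mul_cancel₀ _ hr]
    have h2 := (tendsto_const_nhds : Tendsto (fun _ : ℝ => (1:ℂ)) l (nhds 1)).sub h'
    rw [sub_zero] at h2
    exact h2.congr fun r => by ring
  -- now fix z and pass to the limit in the Schwarz–Pick inequality
  intro z hz0
  have hz : ‖z‖ < 1 := hz0
  have hzb : z ∈ Metric.ball (0:ℂ) 1 := mem_ball_iff_abs.2 hz
  have hFz : ‖F z‖ < 1 := mem_ball_iff_abs.1 (hFmaps hzb)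
  have habs1 : Tendsto (fun r : ℝ => ‖(1 - F (r:ℂ)) / (1 - (r:ℂ))‖) l (nhds α) := by
    have h := (continuous_norm.tendsto (α:ℂ)).comp hratio
    rw [show ‖(α:ℂ)‖ = α from by rw [Complex.norm_real, Real.norm_eq_abs, abs_of_pos hα0]] at h
    exact h
  have habsF : Tendsto (fun r : ℝ => ‖F (r:ℂ)‖) l (nhds 1) := by
    have := (continuous_norm.tendsto 1).comp hF1
    simpa [Function.comp_def] using this
  have hLHS : Tendsto
      (fun r : ℝ => (1 - normSq z) * normSq (1 - (starRingEnd ℂ) (F (r:ℂ)) * F z)) l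
      (nhds ((1 - normSq z) * normSq (1 - F z))) := by
    have hc : Continuous fun w : ℂ => (1 - normSq z) * normSq (1 - (starRingEnd ℂ) w * F z) :=
      continuous_const.mul (Complex.continuous_normSq.comp
        (continuous_const.sub (Complex.continuous_conj.mul continuous_const)))
    have := (hc.tendsto 1).comp hF1
    simpa [Function.comp_def] using this
  have hr1 : Tendsto (fun r : ℝ => (1 + ‖F (r:ℂ)‖) / (1 + r)) l (nhds 1) := by
    have hnum : Tendsto (fun r : ℝ => 1 + ‖F (r:ℂ)‖) l (nhds 2) := by
      have := (tendsto_const_nhds (x := (1:ℝ)) (f := l)).add habsF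
      norm_num at this
      exact this
    have hden2 : Tendsto (fun r : ℝ => 1 + r) l (nhds 2) := by
      have hc : Continuous fun r : ℝ => 1 + r := continuous_const.add continuous_id
      have := (hc.tendsto 1).mono_left hle
      norm_num at this
      exact this
    have := hnum.div hden2 (by norm_num)
    norm_num at this
    exact this
  have hBz : Tendsto (fun r : ℝ => (1 - normSq (F z)) * normSq (1 - (r:ℂ) * z)) l
      (nhds ((1 - normSq (F z)) * normSq (1 - z))) := by
    have hc : Continuous fun r : ℝ => (1 - normSq (F z)) * normSq (1 - (r:ℂ) * z) :=
      continuous_const.mul (Complex.continuous_normSq.comp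
        (continuous_const.sub (Complex.continuous_ofReal.mul continuous_const)))
    have := (hc.tendsto 1).mono_left hle
    simpa using this
  have hRHS := (habs1.mul hr1).mul hBz
  rw [mul_one] at hRHS
  have hineq : ∀ᶠ r : ℝ in l,
      (1 - normSq z) * normSq (1 - (starRingEnd ℂ) (F (r:ℂ)) * F z)
        ≤ ‖(1 - F (r:ℂ)) / (1 - (r:ℂ))‖ * ((1 + ‖F (r:ℂ)‖) / (1 + r)) *
          ((1 - normSq (F z)) * normSq (1 - (r:ℂ) * z)) := by
    filter_upwards [hmem] with r hr
    obtain ⟨hr0, hr1'⟩ := hr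
    have hra : ‖(r:ℂ)‖ < 1 := by
      rw [Complex.norm_real, Real.norm_eq_abs, abs_of_pos hr0]; exact hr1'
    have sp := schwarz_pick_nsq hFdiff hFmaps hra hz
    rw [Complex.conj_ofReal, Complex.normSq_ofReal] at sp
    have habsr : ‖(1 - F (r:ℂ)) / (1 - (r:ℂ))‖
        = ‖1 - F (r:ℂ)‖ / (1 - r) := by
      rw [norm_div]
      congr 1
      rw [show (1:ℂ) - (r:ℂ) = ((1 - r : ℝ) : ℂ) from by push_cast; ring,
        Complex.norm_real, Real.norm_eq_abs, abs_of_pos (by linarith)]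
    have ht : 1 - ‖F (r:ℂ)‖ ≤ ‖1 - F (r:ℂ)‖ := by
      have h := norm_add_le (1 - F (r:ℂ)) (F (r:ℂ))
      rw [sub_add_cancel, norm_one] at h
      linarith
    have ha1 : 1 - normSq (F (r:ℂ))
        ≤ ‖1 - F (r:ℂ)‖ * (1 + ‖F (r:ℂ)‖) := by
      have hsq := Complex.sq_norm (F (r:ℂ))
      nlinarith [norm_nonneg (F (r:ℂ)), norm_nonneg (1 - F (r:ℂ))]
    rw [habsr, div_mul_div_comm, div_mul_eq_mul_div,
      le_div_iff₀ (by nlinarith : (0:ℝ) < (1 - r) * (1 + r))]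
    have hnz : 0 < 1 - normSq (F z) := by linarith [nsq_lt_one hFz]
    nlinarith [sp, mul_le_mul_of_nonneg_right ha1
      (mul_nonneg hnz.le (normSq_nonneg (1 - (r:ℂ) * z)))]
  have hfin := le_of_tendsto_of_tendsto hLHS hRHS hineq
  -- final algebra
  have hNf := hden z hzb
  have hN : 0 < normSq (f₁ z + 1) := normSq_pos.2 hNf
  have h1Fz : 1 - F z = 2 / (f₁ z + 1) := h1F z hzb
  have hn1 : normSq (1 - F z) = 4 / normSq (f₁ z + 1) := by
    rw [h1Fz, normSq_div, show (2:ℂ) = ((2:ℝ):ℂ) from by norm_num, normSq_ofReal]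
    norm_num
  have hn2 : 1 - normSq (F z) = 4 * (f₁ z).re / normSq (f₁ z + 1) := by
    rw [hFdef]
    simp only
    rw [normSq_div, eq_div_iff hN.ne', sub_mul, div_mul_cancel₀ _ hN.ne', one_mul]
    exact four_re (f₁ z)
  have hP : 0 < normSq (1 - F z) := by rw [hn1]; positivity
  have hRe : (f₁ z).re * normSq (1 - F z) = 1 - normSq (F z) := by
    rw [hn1, hn2]
    field_simp
  have hz1 : (1:ℂ) - z ≠ 0 := by
    intro h
    rw [← sub_eq_zero.mp h] at hz
    simp at hz
  have hM : 0 < normSq (1 - z) := normSq_pos.2 hz1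
  rw [← hRe] at hfin
  have key2 : 1 - normSq z ≤ α * (f₁ z).re * normSq (1 - z) := by
    nlinarith [hfin, hP]
  rw [Complex.sq_norm, Complex.sq_norm,
    show (1/α) * ((1 - normSq z) / normSq (1 - z)) = (1 - normSq z) / (α * normSq (1 - z)) from by
      rw [div_mul_div_comm, one_mul],
    div_le_iff₀ (mul_pos hα0 hM)]
  nlinarith [key2]
end
end

section
/- Let r be a holomorphic function on the open unit disk 𝔻 with Re r(z) ≥ 0 for all z ∈ 𝔻, and suppose r(z) = O((1-z)^2) as z tends nontangentially to 1. Then r(z) = 0 for all z ∈ 𝔻. -/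
noncomputable section

open Complex Filter

open Metric

lemma unitDisk_eq : unitDisk = Metric.ball (0:ℂ) 1 := by
  ext z; simp [unitDisk, Metric.mem_ball, Complex.dist_eq]

/-- If the real part vanishes somewhere, a holomorphic map with nonneg real part is constant. -/
lemma const_of_re_zero {r : ℂ → ℂ} (hr : DifferentiableOn ℂ r unitDisk)
    (hre : ∀ z ∈ unitDisk, 0 ≤ (r z).re) {z₀ : ℂ} (hz₀ : z₀ ∈ unitDisk)
    (h0 : (r z₀).re = 0) : ∀ z ∈ unitDisk, r z = r z₀ := by
  have hopen : IsOpen unitDisk := unitDisk_eq ▸ isOpen_ball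
  have hconn : IsPreconnected unitDisk := unitDisk_eq ▸ (convex_ball _ _).isPreconnected
  set g : ℂ → ℂ := fun z => Complex.exp (-(r z)) with hg
  have hgd : DifferentiableOn ℂ g unitDisk := hr.neg.cexp
  have hmax : IsMaxOn (norm ∘ g) unitDisk z₀ := by
    intro z hz
    simp only [Function.comp_apply, hg, Complex.norm_exp, Complex.neg_re,
      h0, neg_zero, Real.exp_zero]
    exact Real.exp_le_one_iff.2 (neg_nonpos.2 (hre z hz))
  have heq := Complex.eqOn_of_isPreconnected_of_isMaxOn_norm hconn hopen hgd hz₀ hmax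
  -- deduce deriv r = 0 on unitDisk
  have hderiv : ∀ z ∈ unitDisk, deriv r z = 0 := by
    intro z hz
    have hrz : DifferentiableAt ℂ r z := hr.differentiableAt (hopen.mem_nhds hz)
    have hgz : HasDerivAt g (Complex.exp (-(r z)) * (-(deriv r z))) z :=
      (hrz.hasDerivAt.neg).cexp
    have hloc : g =ᶠ[nhds z] fun _ => g z₀ := by
      filter_upwards [hopen.mem_nhds hz] with w hw using heq hw
    have hgz0 : HasDerivAt g 0 z :=
      (hasDerivAt_const z (g z₀)).congr_of_eventuallyEq hloc
    have huniq := hgz.unique hgz0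
    have hexp := Complex.exp_ne_zero (-(r z))
    rcases mul_eq_zero.1 huniq with h | h
    · exact absurd h hexp
    · exact neg_eq_zero.1 h
  intro z hz
  have hfd : ∀ w ∈ unitDisk, fderivWithin ℂ r unitDisk w = 0 := by
    intro w hw
    rw [fderivWithin_of_isOpen hopen hw]
    have hrw : DifferentiableAt ℂ r w := hr.differentiableAt (hopen.mem_nhds hw)
    ext v
    simp [← toSpanSingleton_deriv, hderiv w hw]
  have hconv : Convex ℝ unitDisk := unitDisk_eq ▸ convex_ball _ _
  exact hconv.is_const_of_fderivWithin_eq_zero hr hfd hz hz₀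

/-- Harnack-type lower bound along the radius. -/
lemma harnack_radial {r : ℂ → ℂ} (hr : DifferentiableOn ℂ r unitDisk)
    (hpos : ∀ z ∈ unitDisk, 0 < (r z).re) {x : ℝ} (hx : x ∈ Set.Ioo (0:ℝ) 1) :
    (r 0).re * (1 - x) / 4 ≤ (r (x:ℂ)).re := by
  obtain ⟨hx0, hx1⟩ := hx
  have h0mem : (0:ℂ) ∈ unitDisk := by simp [unitDisk]
  have hxmem : (x:ℂ) ∈ unitDisk := by
    simp [unitDisk, Complex.norm_real, abs_of_pos hx0, hx1]
  set a : ℝ := (r 0).re with ha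
  set b : ℝ := (r 0).im with hb
  have hapos : 0 < a := hpos 0 h0mem
  set s : ℂ → ℂ := fun z => r z - (b:ℂ) * Complex.I with hs
  have hs_re : ∀ z, (s z).re = (r z).re := by intro z; simp [hs]
  have hden : ∀ z ∈ unitDisk, s z + (a:ℂ) ≠ 0 := by
    intro z hz h
    have : (s z + (a:ℂ)).re = 0 := by rw [h]; simp
    simp only [Complex.add_re, Complex.ofReal_re, hs_re] at this
    have := hpos z hz
    linarith
  set g : ℂ → ℂ := fun z => (s z - (a:ℂ)) / (s z + (a:ℂ)) with hg
  have hsd : DifferentiableOn ℂ s unitDisk := hr.sub_const _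
  have hgd : DifferentiableOn ℂ g unitDisk := (hsd.sub_const _).div (hsd.add_const _) hden
  have hkey : ∀ z ∈ unitDisk, ‖s z - (a:ℂ)‖ < ‖s z + (a:ℂ)‖ := by
    intro z hz
    have hre : 0 < (s z).re := by rw [hs_re]; exact hpos z hz
    have h1 : (‖s z - (a:ℂ)‖)^2 < (‖s z + (a:ℂ)‖)^2 := by
      rw [Complex.sq_norm, Complex.sq_norm, Complex.normSq_apply, Complex.normSq_apply]
      simp only [Complex.sub_re, Complex.sub_im, Complex.add_re, Complex.add_im,
        Complex.ofReal_re, Complex.ofReal_im, sub_zero, add_zero]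
      nlinarith [hre, hapos]
    exact lt_of_pow_lt_pow_left₀ 2 (norm_nonneg _) h1
  have hmaps : Set.MapsTo g (Metric.ball (0:ℂ) 1) (Metric.ball (0:ℂ) 1) := by
    intro z hz
    rw [← unitDisk_eq] at hz
    rw [mem_ball_zero_iff]
    have hd := hkey z hz
    have hdpos : 0 < ‖s z + (a:ℂ)‖ := lt_of_le_of_lt (norm_nonneg _) hd
    simp only [hg, norm_div]
    exact div_lt_one hdpos |>.2 hd
  have hg0 : g 0 = 0 := by
    have h00 : r 0 = (a:ℂ) + (b:ℂ) * Complex.I := (Complex.re_add_im (r 0)).symm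
    have hs0 : s 0 = (a:ℂ) := by
      simp only [hs]
      rw [h00]; ring
    simp [hg, hs0]
  have hschwarz : ‖g (x:ℂ)‖ ≤ ‖(x:ℂ)‖ := by
    apply Complex.norm_le_norm_of_mapsTo_ball (unitDisk_eq ▸ hgd) (hmaps.mono_right ball_subset_closedBall) hg0
    simp [Complex.norm_real, abs_of_pos hx0, hx1]
  have habsx : ‖(x:ℂ)‖ = x := by simp [Complex.norm_real, abs_of_pos hx0]
  rw [habsx] at hschwarz
  set v : ℂ := s (x:ℂ) with hv
  have hvre : 0 < v.re := by rw [hv, hs_re]; exact hpos _ hxmem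
  have hineq : ‖v - (a:ℂ)‖ ≤ x * ‖v + (a:ℂ)‖ := by
    have hd := hden (x:ℂ) hxmem
    have hdpos : 0 < ‖v + (a:ℂ)‖ := by
      rw [hv]; exact (norm_pos_iff.2 hd)
    have := hschwarz
    simp only [hg, norm_div] at this
    calc ‖v - (a:ℂ)‖ = ‖v - (a:ℂ)‖ / ‖v + (a:ℂ)‖ *
        ‖v + (a:ℂ)‖ := by field_simp
      _ ≤ x * ‖v + (a:ℂ)‖ := by
          apply mul_le_mul_of_nonneg_right _ (norm_nonneg _)
          exact this
  have hsq : (‖v - (a:ℂ)‖)^2 ≤ x^2 * (‖v + (a:ℂ)‖)^2 := by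
    have := pow_le_pow_left₀ (norm_nonneg _) hineq 2
    rw [mul_pow] at this
    exact this
  rw [Complex.sq_norm, Complex.sq_norm, Complex.normSq_apply, Complex.normSq_apply] at hsq
  simp only [Complex.sub_re, Complex.sub_im, Complex.add_re, Complex.add_im,
    Complex.ofReal_re, Complex.ofReal_im, sub_zero, add_zero] at hsq
  have hre_eq : (r (x:ℂ)).re = v.re := (hs_re (x:ℂ)).symm
  rw [hre_eq]
  have hx2 : (0:ℝ) < 1 - x^2 := by nlinarith
  have key : (1 - x^2) * a^2 ≤ 2 * a * v.re * (1 + x^2) := by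
    nlinarith [mul_nonneg hx2.le (sq_nonneg v.re), mul_nonneg hx2.le (sq_nonneg v.im)]
  have key2 : (1 - x^2) * a ≤ 2 * v.re * (1 + x^2) := by
    have h5 : a * ((1 - x^2) * a) ≤ a * (2 * v.re * (1 + x^2)) := by nlinarith [key]
    exact le_of_mul_le_mul_left h5 hapos
  nlinarith [key2, mul_pos hvre hx2, mul_pos (mul_pos hapos hx0) (show (0:ℝ) < 1 - x by linarith)]

theorem herglotz_rigidity (r : ℂ → ℂ)
    (hr : DifferentiableOn ℂ r unitDisk)
    (hre : ∀ z ∈ unitDisk, 0 ≤ (r z).re)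
    (hO : NTBigO r 2) :
    ∀ z ∈ unitDisk, r z = 0 := by
  -- Radial big-O bound
  obtain ⟨c, hc⟩ := (hO 2 one_lt_two).bound
  have hIoo : Set.Ioo (0:ℝ) 1 ∈ nhdsWithin (1:ℝ) (Set.Iio 1) :=
    Ioo_mem_nhdsLT_of_mem (by constructor <;> norm_num)
  have htend : Tendsto (fun x : ℝ => (x:ℂ)) (nhdsWithin (1:ℝ) (Set.Iio 1))
      (nhdsWithin 1 (stolzRegion 2)) := by
    rw [tendsto_nhdsWithin_iff]
    constructor
    · exact (Complex.continuous_ofReal.tendsto 1).mono_left nhdsWithin_le_nhds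
    · filter_upwards [hIoo] with x hx
      obtain ⟨hx0, hx1⟩ := hx
      constructor
      · simp [Complex.norm_real, abs_of_pos hx0, hx1]
      · have h1 : ‖(x:ℂ) - 1‖ = 1 - x := by
          rw [show (x:ℂ) - 1 = ((x - 1 : ℝ) : ℂ) by push_cast; ring]
          rw [Complex.norm_real, Real.norm_eq_abs, abs_of_nonpos (by linarith)]
          ring
        rw [h1]
        simp [Complex.norm_real, abs_of_pos hx0]
        linarith
  have hbound : ∀ᶠ x : ℝ in nhdsWithin (1:ℝ) (Set.Iio 1),
      ‖r (x:ℂ)‖ ≤ c * (1 - x)^2 := by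
    filter_upwards [htend.eventually hc, hIoo] with x hx hx'
    obtain ⟨hx0, hx1⟩ := hx'
    have h1 : ‖((x:ℂ) - 1)^2‖ = (1 - x)^2 := by
      rw [norm_pow,
        show (x:ℂ) - 1 = ((x - 1 : ℝ) : ℂ) by push_cast; ring,
        Complex.norm_real, Real.norm_eq_abs, abs_of_nonpos (by linarith)]
      ring
    rw [h1] at hx
    exact hx
  have hlim : Tendsto (fun x : ℝ => c * (1 - x)^2) (nhdsWithin (1:ℝ) (Set.Iio 1)) (nhds 0) := by
    have : Tendsto (fun x : ℝ => c * (1 - x)^2) (nhds (1:ℝ)) (nhds (c * (1 - 1)^2)) := by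
      apply Continuous.tendsto
      continuity
    simpa using this.mono_left nhdsWithin_le_nhds
  have h0mem : (0:ℂ) ∈ unitDisk := by simp [unitDisk]
  -- Show (r 0).re = 0
  have hre0 : (r 0).re = 0 := by
    by_contra h
    have hapos : 0 < (r 0).re := lt_of_le_of_ne (hre 0 h0mem) (Ne.symm h)
    have hpos : ∀ z ∈ unitDisk, 0 < (r z).re := by
      intro z hz
      rcases lt_or_eq_of_le (hre z hz) with h' | h'
      · exact h'
      · exfalso
        have := const_of_re_zero hr hre hz h'.symm
        have h0 := this 0 h0mem
        rw [h0] at hapos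
        rw [← h'] at hapos
        exact lt_irrefl _ hapos
    set a := (r 0).re with ha
    have hev : ∀ᶠ x : ℝ in nhdsWithin (1:ℝ) (Set.Iio 1), a / 4 ≤ c * (1 - x) := by
      filter_upwards [hbound, hIoo] with x hx hx'
      obtain ⟨hx0, hx1⟩ := hx'
      have h1 := harnack_radial hr hpos ⟨hx0, hx1⟩
      have h2 : (r (x:ℂ)).re ≤ ‖r (x:ℂ)‖ := by
        exact Complex.re_le_norm _
      have h3 : a * (1 - x) / 4 ≤ c * (1 - x)^2 := by linarith
      have h4 : (0:ℝ) < 1 - x := by linarith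
      nlinarith
    have hlim2 : Tendsto (fun x : ℝ => c * (1 - x)) (nhdsWithin (1:ℝ) (Set.Iio 1)) (nhds 0) := by
      have : Tendsto (fun x : ℝ => c * (1 - x)) (nhds (1:ℝ)) (nhds (c * (1 - 1))) := by
        apply Continuous.tendsto; continuity
      simpa using this.mono_left nhdsWithin_le_nhds
    have : a / 4 ≤ 0 := ge_of_tendsto hlim2 hev
    linarith
  -- r is constant, equal to r 0
  have hconst := const_of_re_zero hr hre h0mem hre0
  have hr0 : r 0 = 0 := by
    have hev : ∀ᶠ x : ℝ in nhdsWithin (1:ℝ) (Set.Iio 1), ‖r 0‖ ≤ c * (1 - x)^2 := by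
      filter_upwards [hbound, hIoo] with x hx hx'
      obtain ⟨hx0, hx1⟩ := hx'
      have hxmem : (x:ℂ) ∈ unitDisk := by
        simp [unitDisk, Complex.norm_real, abs_of_pos hx0, hx1]
      rw [← hconst (x:ℂ) hxmem]
      exact hx
    have : ‖r 0‖ ≤ 0 := ge_of_tendsto hlim hev
    exact norm_le_zero_iff.1 this
  intro z hz
  rw [hconst z hz, hr0]
end
end
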